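/- Let p > 1, set L(s) = s⁴ − (32p/(p+1))s² + (32p(p+3)/(p+1)²)s − 64p/(p+1)² and t₀ = √(2p/(p+1)) + √(2p/(p+1) − √(2p/(p+1))). Then L(2t₀) < 0. -/
import Mathlib


/-- The quartic polynomial `L`. -/
noncomputable def Lpoly (p s : ℝ) : ℝ :=
  s ^ 4 - 32 * p / (p + 1) * s ^ 2 + 32 * p * (p + 3) / (p + 1) ^ 2 * s
    - 64 * p / (p + 1) ^ 2

/-- `t₀ = √(2p/(p+1)) + √(2p/(p+1) − √(2p/(p+1)))`. -/
noncomputable def t0 (p : ℝ) : ℝ :=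
  Real.sqrt (2 * p / (p + 1)) +
    Real.sqrt (2 * p / (p + 1) - Real.sqrt (2 * p / (p + 1)))

/-- The quartic polynomial `H` from Theorem 1.1. -/
noncomputable def Hpoly (p x : ℝ) : ℝ :=
  x ^ 4 - 32 * p * (p + 1) / (p - 1) ^ 2 * x ^ 2
    + 32 * p * (p + 1) * (p + 3) / (p - 1) ^ 3 * x
    - 64 * p * (p + 1) ^ 2 / (p - 1) ^ 4
/-- `L(2t₀) < 0` for every `p > 1`. -/
theorem Lpoly_neg_at_two_t0 (p : ℝ) (hp : 1 < p) : Lpoly p (2 * t0 p) < 0 := by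
  have hp1 : (0:ℝ) < p + 1 := by linarith
  set a : ℝ := 2 * p / (p + 1) with ha_def
  have ha1 : 1 < a := by
    rw [ha_def, lt_div_iff₀ hp1]; linarith
  set r : ℝ := Real.sqrt a with hr_def
  have hr1 : 1 < r := by
    rw [hr_def, show (1:ℝ) = Real.sqrt 1 by simp]
    exact Real.sqrt_lt_sqrt zero_le_one ha1
  have hr2 : r ^ 2 = a := Real.sq_sqrt (by linarith)
  have har : 0 ≤ a - r := by nlinarith
  set u : ℝ := Real.sqrt (a - r) with hu_def
  have hu0 : 0 ≤ u := Real.sqrt_nonneg _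
  have hu2 : u ^ 2 = r ^ 2 - r := by
    rw [hu_def, Real.sq_sqrt har, hr2]
  have ht0 : t0 p = r + u := rfl
  have hra : r ^ 2 * (p + 1) = 2 * p := by
    rw [hr2, ha_def]; field_simp
  -- rewrite the coefficients of L in terms of r
  have hc1 : 32 * p / (p + 1) = 16 * r ^ 2 := by
    rw [div_eq_iff (ne_of_gt hp1)]; linarith [hra]
  have hc2 : 32 * p * (p + 3) / (p + 1) ^ 2 = 16 * r ^ 2 * (3 - r ^ 2) := by
    rw [div_eq_iff (pow_ne_zero 2 (ne_of_gt hp1))]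
    have h2 : r ^ 2 * (p + 1) * (r ^ 2 * (p + 1)) = 2 * p * (2 * p) := by
      rw [hra]
    nlinarith [hra, h2]
  have hc3 : 64 * p / (p + 1) ^ 2 = 16 * r ^ 2 * (2 - r ^ 2) := by
    rw [div_eq_iff (pow_ne_zero 2 (ne_of_gt hp1))]
    have h2 : r ^ 2 * (p + 1) * (r ^ 2 * (p + 1)) = 2 * p * (2 * p) := by
      rw [hra]
    nlinarith [hra, h2]
  have key : Lpoly p (2 * t0 p) =
      16 * (r ^ 2 * (1 - r ^ 2) * (2 * r - 1 + 2 * u)) := by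
    rw [Lpoly, ht0, hc1, hc2, hc3]
    linear_combination (16 * u ^ 2 + 64 * r * u + 48 * r ^ 2 - 16 * r) * hu2
  rw [key]
  have hpos : 0 < r ^ 2 * (r ^ 2 - 1) * (2 * r - 1 + 2 * u) := by
    apply mul_pos (mul_pos (by positivity) (by nlinarith)) (by nlinarith)
  nlinarith [hpos]
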